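/- With λ, c, u > 0, the long-term average freshness of a file in a single-cache system, defined as F = 1 − λ·E[min(X+Y, T_s)] where X ~ Exp(c), Y ~ Exp(u), T_s ~ Exp(λ) are independent, equals (u/(λ+u))·(c/(λ+c)). -/

import Mathlib

open MeasureTheory ProbabilityTheory
open Real Set

lemma expMeasure_eq' (r : ℝ) : expMeasure r = volume.withDensity (exponentialPDF r) := rfl

lemma measurable_expPDF (r : ℝ) : Measurable (exponentialPDF r) :=
  (measurable_exponentialPDFReal r).ennreal_ofReal

lemma expMeasure_Iio_zero {r : ℝ} : expMeasure r (Set.Iio 0) = 0 := by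
  rw [expMeasure_eq', withDensity_apply _ measurableSet_Iio]
  exact lintegral_exponentialPDF_of_nonpos le_rfl

lemma ae_nonneg_expMeasure {r : ℝ} : ∀ᵐ x ∂(expMeasure r), 0 ≤ x := by
  rw [ae_iff]
  have : {x : ℝ | ¬ 0 ≤ x} = Set.Iio 0 := by ext x; simp [not_le]
  rw [this]
  exact expMeasure_Iio_zero

lemma laplace_lintegral {r s : ℝ} (hr : 0 < r) (hs : 0 < s) :
    ∫⁻ x, ENNReal.ofReal (rexp (-(s * x))) ∂(expMeasure r) = ENNReal.ofReal (r / (r + s)) := by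
  rw [expMeasure_eq', lintegral_withDensity_eq_lintegral_mul _ (measurable_expPDF r)
    (by fun_prop)]
  have key : ∀ x : ℝ, (exponentialPDF r * fun x => ENNReal.ofReal (rexp (-(s * x)))) x
      = ENNReal.ofReal (r / (r + s)) * exponentialPDF (r + s) x := by
    intro x
    simp only [Pi.mul_apply, exponentialPDF_eq]
    split_ifs with h
    · rw [← ENNReal.ofReal_mul (by positivity), ← ENNReal.ofReal_mul (by positivity)]
      congr 1
      have hexp : rexp (-(r * x)) * rexp (-(s * x)) = rexp (-((r + s) * x)) := by
        rw [← Real.exp_add]; congr 1; ring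
      have hrs : r + s ≠ 0 := by positivity
      rw [mul_assoc, hexp, ← mul_assoc, div_mul_cancel₀ r hrs]
    · simp
  rw [lintegral_congr key, lintegral_const_mul _ (measurable_expPDF (r + s)),
    lintegral_exponentialPDF_eq_one (by linarith), mul_one]

lemma laplace_integral {r s : ℝ} (hr : 0 < r) (hs : 0 < s) :
    ∫ x, rexp (-(s * x)) ∂(expMeasure r) = r / (r + s) := by
  have : IsProbabilityMeasure (expMeasure r) := isProbabilityMeasure_expMeasure hr
  rw [integral_eq_lintegral_of_nonneg_ae (ae_of_all _ fun x => (Real.exp_pos _).le)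
    (Continuous.aestronglyMeasurable (by continuity)),
    laplace_lintegral hr hs, ENNReal.toReal_ofReal (by positivity)]

lemma exponentialPDFReal_eq' (r x : ℝ) :
    exponentialPDFReal r x = if 0 ≤ x then r * rexp (-(r * x)) else 0 := by
  rw [exponentialPDFReal, gammaPDFReal]
  split_ifs with h
  · simp [Real.Gamma_one]
  · rfl

lemma hasDerivAt_exp_neg_mul (r t : ℝ) :
    HasDerivAt (fun t : ℝ => rexp (-(r * t))) (-r * rexp (-(r * t))) t := by
  have h1 : HasDerivAt (fun t : ℝ => -(r * t)) (-r) t := by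
    simpa [neg_mul] using (hasDerivAt_id t).const_mul (-r)
  simpa [mul_comm] using h1.exp

lemma integral_min_pdf {r z : ℝ} (hr : 0 < r) (hz : 0 ≤ z) :
    (∫ t, exponentialPDFReal r t * min z t) = (1 - rexp (-(r * z))) / r ∧
    Integrable (fun t => exponentialPDFReal r t * min z t) volume := by
  set f1 : ℝ → ℝ := fun t => t * (r * rexp (-(r * t))) with hf1
  set f2 : ℝ → ℝ := fun t => z * (r * rexp (-(r * t))) with hf2
  have hrep : (fun t => exponentialPDFReal r t * min z t)
      = fun t => (Ioc 0 z).indicator f1 t + (Ioi z).indicator f2 t := by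
    funext t
    rw [exponentialPDFReal_eq']
    by_cases h1 : 0 < t
    · by_cases h2 : t ≤ z
      · rw [indicator_of_mem (mem_Ioc.2 ⟨h1, h2⟩), indicator_of_notMem (by simpa using h2),
          if_pos h1.le, min_eq_right h2]
        ring
      · push_neg at h2
        rw [indicator_of_notMem (by simp [not_le.2 h2]), indicator_of_mem (mem_Ioi.2 h2),
          if_pos h1.le, min_eq_left h2.le]
        ring
    · push_neg at h1
      rw [indicator_of_notMem (fun hm => absurd (mem_Ioc.1 hm).1 (not_lt.2 h1)),
        indicator_of_notMem (fun hm => absurd (mem_Ioi.1 hm) (not_lt.2 (h1.trans hz))),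
        min_eq_right (h1.trans hz)]
      rcases h1.lt_or_eq with h | h
      · rw [if_neg (not_le.2 h)]; ring
      · subst h; simp
  have i1 : IntegrableOn f1 (Ioc 0 z) := by
    apply Continuous.integrableOn_Ioc
    continuity
  have i2 : IntegrableOn f2 (Ioi z) := by
    have h : IntegrableOn (fun x => z * r * rexp (-r * x)) (Ioi z) volume :=
      (exp_neg_integrableOn_Ioi z hr).const_mul (z * r)
    exact h.congr_fun (fun t _ => by simp only [hf2, neg_mul]; ring) measurableSet_Ioi
  have int1 : ∫ t in Ioc 0 z, f1 t = 1 / r - rexp (-(r * z)) / r - z * rexp (-(r * z)) := by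
    rw [← intervalIntegral.integral_of_le hz]
    have hF : ∀ t ∈ uIcc 0 z, HasDerivAt
        (fun t => -(t * rexp (-(r * t))) - rexp (-(r * t)) / r) (f1 t) t := by
      intro t _
      have hexp := hasDerivAt_exp_neg_mul r t
      have h2 : HasDerivAt (fun t : ℝ => t * rexp (-(r * t)))
          (1 * rexp (-(r * t)) + t * (-r * rexp (-(r * t)))) t := (hasDerivAt_id t).mul hexp
      have := h2.neg.sub (hexp.div_const r)
      convert this using 1
      show t * (r * rexp (-(r * t))) = _
      field_simp
      ring
      all_goals rfl
    rw [intervalIntegral.integral_eq_sub_of_hasDerivAt hF (by apply Continuous.intervalIntegrable; continuity)]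
    simp only [mul_zero, neg_zero, Real.exp_zero, zero_mul, neg_zero]
    ring
  have int2 : ∫ t in Ioi z, f2 t = z * rexp (-(r * z)) := by
    have hc : ∫ t in Ioi z, f2 t = (z * r) * ∫ t in Ioi z, rexp (-(r * t)) := by
      rw [← integral_const_mul (z * r) (fun t => rexp (-(r * t)))]
      congr 1; funext t; simp only [hf2]; ring
    have hsub : ∫ t in Ioi z, rexp (-(r * t)) = r⁻¹ * rexp (-(r * z)) := by
      have h := integral_comp_mul_left_Ioi (fun x => rexp (-x)) z hr
      simp only [smul_eq_mul] at h
      rw [h, integral_exp_neg_Ioi]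
    rw [hc, hsub]
    field_simp
  have hint : Integrable (fun t => exponentialPDFReal r t * min z t) volume := by
    rw [hrep]
    exact (i1.integrable_indicator measurableSet_Ioc).add (i2.integrable_indicator measurableSet_Ioi)
  refine ⟨?_, hint⟩
  rw [hrep, integral_add (i1.integrable_indicator measurableSet_Ioc)
    (i2.integrable_indicator measurableSet_Ioi),
    integral_indicator measurableSet_Ioc, integral_indicator measurableSet_Ioi, int1, int2]
  ring

lemma min_lintegral {r z : ℝ} (hr : 0 < r) (hz : 0 ≤ z) :
    ∫⁻ t, ENNReal.ofReal (min z t) ∂(expMeasure r)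
      = ENNReal.ofReal ((1 - rexp (-(r * z))) / r) := by
  obtain ⟨hval, hint⟩ := integral_min_pdf hr hz
  rw [expMeasure_eq', lintegral_withDensity_eq_lintegral_mul _ (measurable_expPDF r)
    (by fun_prop)]
  have key : ∀ t : ℝ, (exponentialPDF r * fun t => ENNReal.ofReal (min z t)) t
      = ENNReal.ofReal (exponentialPDFReal r t * min z t) := by
    intro t
    simp only [Pi.mul_apply, exponentialPDF]
    rw [ENNReal.ofReal_mul (exponentialPDFReal_nonneg hr t)]
  have hnn : 0 ≤ᵐ[volume] fun t => exponentialPDFReal r t * min z t := by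
    refine ae_of_all _ fun t => ?_
    simp only [Pi.zero_apply]
    rw [exponentialPDFReal_eq']
    split_ifs with h
    · exact mul_nonneg (by positivity) (le_min hz h)
    · simp
  rw [lintegral_congr key, ← ofReal_integral_eq_lintegral_ofReal hint hnn, hval]

/-- Long-term average freshness of a file in a single-cache system:
`F = 1 − λ·E[min(X+Y, T)] = (u/(λ+u))·(c/(λ+c))`. -/
theorem single_cache_freshness
    {Ω : Type*} [MeasurableSpace Ω] (μ : Measure Ω) [IsProbabilityMeasure μ]
    (lam c u : ℝ) (hlam : 0 < lam) (hc : 0 < c) (hu : 0 < u) (hcu : c ≠ u)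
    (X Y T : Ω → ℝ) (hXm : Measurable X) (hYm : Measurable Y) (hTm : Measurable T)
    (hX : μ.map X = expMeasure c) (hY : μ.map Y = expMeasure u)
    (hT : μ.map T = expMeasure lam)
    (hind : iIndepFun ![X, Y, T] μ) :
    1 - lam * ∫ ω, min (X ω + Y ω) (T ω) ∂μ = (u / (lam + u)) * (c / (lam + c)) := by
  have hprobT : IsProbabilityMeasure (expMeasure lam) := isProbabilityMeasure_expMeasure hlam
  set Z : Ω → ℝ := fun ω => X ω + Y ω with hZdef
  have hZm : Measurable Z := hXm.add hYm
  have hprobZ : IsProbabilityMeasure (μ.map Z) := Measure.isProbabilityMeasure_map hZm.aemeasurable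
  -- a.e. nonnegativity
  have haeX : ∀ᵐ ω ∂μ, 0 ≤ X ω := by
    have h : ∀ᵐ x ∂(μ.map X), 0 ≤ x := hX ▸ ae_nonneg_expMeasure
    exact (ae_map_iff hXm.aemeasurable measurableSet_Ici).mp h
  have haeY : ∀ᵐ ω ∂μ, 0 ≤ Y ω := by
    have h : ∀ᵐ x ∂(μ.map Y), 0 ≤ x := hY ▸ ae_nonneg_expMeasure
    exact (ae_map_iff hYm.aemeasurable measurableSet_Ici).mp h
  have haeT : ∀ᵐ ω ∂μ, 0 ≤ T ω := by
    have h : ∀ᵐ x ∂(μ.map T), 0 ≤ x := hT ▸ ae_nonneg_expMeasure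
    exact (ae_map_iff hTm.aemeasurable measurableSet_Ici).mp h
  have haeZ : ∀ᵐ ω ∂μ, 0 ≤ Z ω := by
    filter_upwards [haeX, haeY] with ω h1 h2
    exact add_nonneg h1 h2
  have haeZ' : ∀ᵐ z ∂(μ.map Z), 0 ≤ z :=
    (ae_map_iff hZm.aemeasurable measurableSet_Ici).mpr haeZ
  -- independence
  have hmeas3 : ∀ i, Measurable (![X, Y, T] i) := by
    intro i
    fin_cases i <;> assumption
  have hindZT : IndepFun Z T μ := by
    have h := hind.indepFun_add_left hmeas3 0 1 2 (by decide) (by decide)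
    exact h
  have hindXY : IndepFun X Y μ := hind.indepFun (show (0 : Fin 3) ≠ 1 by decide)
  -- map of the pair
  have hmap : μ.map (fun ω => (Z ω, T ω)) = (μ.map Z).prod (expMeasure lam) := by
    rw [← hT]
    exact (indepFun_iff_map_prod_eq_prod_map_map hZm.aemeasurable hTm.aemeasurable).mp hindZT
  -- the function g
  set g : ℝ → ℝ := fun z => (1 - rexp (-(lam * z))) / lam with hgdef
  have hgm : Measurable g := by fun_prop
  have hgint : Integrable g (μ.map Z) := by
    refine (integrable_const (1 / lam)).mono' hgm.aestronglyMeasurable ?_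
    filter_upwards [haeZ'] with z hz
    have he1 : rexp (-(lam * z)) ≤ 1 := Real.exp_le_one_iff.mpr (by nlinarith)
    have he0 : 0 < rexp (-(lam * z)) := Real.exp_pos _
    rw [Real.norm_eq_abs, abs_of_nonneg (div_nonneg (by linarith) hlam.le)]
    gcongr
    linarith
  -- rewrite the main integral
  have key : ∫ ω, min (X ω + Y ω) (T ω) ∂μ = ∫ z, g z ∂(μ.map Z) := by
    have hmin_nn : 0 ≤ᵐ[μ] fun ω => min (Z ω) (T ω) := by
      filter_upwards [haeZ, haeT] with ω h1 h2
      exact le_min h1 h2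
    have hminm : Measurable fun ω => min (Z ω) (T ω) := hZm.min hTm
    rw [show (fun ω => min (X ω + Y ω) (T ω)) = fun ω => min (Z ω) (T ω) from rfl,
      integral_eq_lintegral_of_nonneg_ae hmin_nn hminm.aestronglyMeasurable]
    have hpm : Measurable fun p : ℝ × ℝ => ENNReal.ofReal (min p.1 p.2) := by fun_prop
    have l1 : ∫⁻ ω, ENNReal.ofReal (min (Z ω) (T ω)) ∂μ
        = ∫⁻ p : ℝ × ℝ, ENNReal.ofReal (min p.1 p.2) ∂((μ.map Z).prod (expMeasure lam)) := by
      rw [← hmap, lintegral_map hpm (hZm.prodMk hTm)]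
    rw [l1, lintegral_prod _ hpm.aemeasurable]
    have l2 : ∫⁻ z, ∫⁻ t, ENNReal.ofReal (min z t) ∂(expMeasure lam) ∂(μ.map Z)
        = ∫⁻ z, ENNReal.ofReal (g z) ∂(μ.map Z) := by
      refine lintegral_congr_ae ?_
      filter_upwards [haeZ'] with z hz
      rw [min_lintegral hlam hz]
    have hgnn : 0 ≤ᵐ[μ.map Z] g := by
      filter_upwards [haeZ'] with z hz
      have : rexp (-(lam * z)) ≤ 1 := Real.exp_le_one_iff.mpr (by nlinarith)
      exact div_nonneg (by linarith) hlam.le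
    rw [l2, ← ofReal_integral_eq_lintegral_ofReal hgint hgnn,
      ENNReal.toReal_ofReal (integral_nonneg_of_ae hgnn)]
  rw [key]
  have hem : Measurable fun x : ℝ => rexp (-(lam * x)) :=
    Real.measurable_exp.comp (measurable_id.const_mul lam).neg
  -- compute ∫ g
  have hem' : Measurable fun x : ℝ => rexp (-(lam * x)) :=
    Real.measurable_exp.comp (measurable_id.const_mul lam).neg
  have hexpint : Integrable (fun z => rexp (-(lam * z))) (μ.map Z) := by
    refine (integrable_const (1 : ℝ)).mono' hem'.aestronglyMeasurable ?_
    filter_upwards [haeZ'] with z hz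
    rw [Real.norm_eq_abs, abs_of_pos (Real.exp_pos _)]
    exact Real.exp_le_one_iff.mpr (by nlinarith)
  have hZint : ∫ z, rexp (-(lam * z)) ∂(μ.map Z) = (c / (c + lam)) * (u / (u + lam)) := by
    rw [integral_map hZm.aemeasurable hem.aestronglyMeasurable]
    have hsplit : (fun ω => rexp (-(lam * Z ω)))
        = (fun ω => rexp (-(lam * X ω))) * fun ω => rexp (-(lam * Y ω)) := by
      funext ω
      simp only [Pi.mul_apply, hZdef, ← Real.exp_add]
      congr 1
      ring
    have hiexp : IndepFun (fun ω => rexp (-(lam * X ω))) (fun ω => rexp (-(lam * Y ω))) μ :=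
      hindXY.comp hem hem
    rw [show (∫ ω, rexp (-(lam * Z ω)) ∂μ)
        = ∫ ω, ((fun ω => rexp (-(lam * X ω))) * fun ω => rexp (-(lam * Y ω))) ω ∂μ by
      rw [← hsplit]]
    rw [hiexp.integral_mul_eq_mul_integral (hem.comp hXm).aestronglyMeasurable (hem.comp hYm).aestronglyMeasurable]
    have h1 : ∫ ω, rexp (-(lam * X ω)) ∂μ = c / (c + lam) := by
      rw [← laplace_integral hc hlam, ← hX,
        integral_map hXm.aemeasurable hem.aestronglyMeasurable]
    have h2 : ∫ ω, rexp (-(lam * Y ω)) ∂μ = u / (u + lam) := by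
      rw [← laplace_integral hu hlam, ← hY,
        integral_map hYm.aemeasurable hem.aestronglyMeasurable]
    rw [h1, h2]
  have hgval : ∫ z, g z ∂(μ.map Z)
      = (1 - (c / (c + lam)) * (u / (u + lam))) / lam := by
    simp only [hgdef]
    rw [integral_div, integral_sub (integrable_const 1) hexpint, integral_const, probReal_univ,
      one_smul, hZint]
  rw [hgval]
  have hclam : c + lam ≠ 0 := by positivity
  have hulam : u + lam ≠ 0 := by positivity
  have hlamc : lam + c ≠ 0 := by positivity
  have hlamu : lam + u ≠ 0 := by positivity
  field_simp
  ring
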